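/- Let σ : ℝ → ℝ be Lipschitz with Lipschitz constant Lip_σ, and let the forcing satisfy C_ξ := sup_{n≥0} sup_{x∈ℤ^d} |ξ_n(x)| < ∞ together with p(0) ≥ C_ξ·Lip_σ, and σ(0) = 0. If u_0(x) ≥ 0 for all x ∈ ℤ^d, then the solution u of the discrete heat equation u_{n+1}(x) = (𝒫u_n)(x) + σ(u_n(x))ξ_n(x) satisfies u_n(x) ≥ 0 for all n ≥ 0 and x ∈ ℤ^d. -/

import Mathlib

open Filter Real

noncomputable section

/-- Transition operator of the random walk on `ℤ^d` with step distribution `p`. -/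
def transOp {d : ℕ} (p : (Fin d → ℤ) → ℝ) (h : (Fin d → ℤ) → ℝ) (x : Fin d → ℤ) : ℝ :=
  ∑' y : Fin d → ℤ, p (y - x) * h y

/-- **Corollary 3.6 (positivity principle).**  If `sup_{n,x}|ξ_n(x)| ≤ C_ξ`,
`p(0) ≥ C_ξ·Lip_σ` and `σ(0) = 0`, then nonnegative initial data produce a
nonnegative solution of the discrete heat equation. -/
theorem discrete_heat_positivity
    {d : ℕ} (hd : 1 ≤ d)
    (p : (Fin d → ℤ) → ℝ) (hp_nonneg : ∀ x, 0 ≤ p x) (hp_le : ∀ x, p x ≤ 1)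
    (hp_sum : ∑' x : Fin d → ℤ, p x = 1)
    (σ : ℝ → ℝ) (Lipσ : ℝ)
    (hLip : ∀ x y : ℝ, |σ x - σ y| ≤ Lipσ * |x - y|)
    (hσ0 : σ 0 = 0)
    (ξ : ℕ → (Fin d → ℤ) → ℝ)
    (Cξ : ℝ) (hCξ : ∀ n x, |ξ n x| ≤ Cξ)
    (hcomp : Cξ * Lipσ ≤ p 0)
    (u₀ : (Fin d → ℤ) → ℝ) (hu₀_bdd : ∃ B : ℝ, ∀ x, |u₀ x| ≤ B)
    (h₀ : ∀ x, 0 ≤ u₀ x)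
    (u : ℕ → (Fin d → ℤ) → ℝ)
    (hu_init : ∀ x, u 0 x = u₀ x)
    (hu_rec : ∀ n x, u (n + 1) x = transOp p (u n) x + σ (u n x) * ξ n x) :
    ∀ n x, 0 ≤ u n x := by
  have hps : Summable p := by
    by_contra h
    rw [tsum_eq_zero_of_not_summable h] at hp_sum
    norm_num at hp_sum
  have hLσ : 0 ≤ Lipσ := by
    have h := hLip 1 0
    have h2 : (0:ℝ) ≤ |σ 1 - σ 0| := abs_nonneg _
    simp at h
    linarith
  have hCξ0 : 0 ≤ Cξ := le_trans (abs_nonneg _) (hCξ 0 0)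
  have hσabs : ∀ t : ℝ, |σ t| ≤ Lipσ * |t| := by
    intro t
    have := hLip t 0
    simpa [hσ0] using this
  have hpx : ∀ x : Fin d → ℤ, Summable (fun y => p (y - x)) :=
    fun x => (Equiv.subRight x).summable_iff.mpr hps
  have hpx1 : ∀ x : Fin d → ℤ, ∑' y, p (y - x) = 1 := by
    intro x
    rw [← hp_sum]
    exact (Equiv.subRight x).tsum_eq p
  have hbdd : ∀ n, ∃ B, 0 ≤ B ∧ ∀ x, |u n x| ≤ B := by
    intro n
    induction n with
    | zero =>
      obtain ⟨B, hB⟩ := hu₀_bdd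
      exact ⟨B, le_trans (abs_nonneg _) (hB 0), fun x => by rw [hu_init]; exact hB x⟩
    | succ n ih =>
      obtain ⟨B, hB0, hB⟩ := ih
      refine ⟨B + Lipσ * B * Cξ, by positivity, fun x => ?_⟩
      rw [hu_rec]
      have hsum : Summable (fun y => p (y - x) * u n y) := by
        apply Summable.of_norm_bounded ((hpx x).mul_right B)
        intro y
        rw [Real.norm_eq_abs, abs_mul, abs_of_nonneg (hp_nonneg _)]
        exact mul_le_mul_of_nonneg_left (hB y) (hp_nonneg _)
      have hub : ∑' y, p (y - x) * u n y ≤ B := by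
        have h := Summable.tsum_le_tsum (f := fun y => p (y - x) * u n y)
          (g := fun y => p (y - x) * B)
          (fun y => mul_le_mul_of_nonneg_left (le_trans (le_abs_self _) (hB y))
            (hp_nonneg _)) hsum ((hpx x).mul_right B)
        rwa [tsum_mul_right, hpx1 x, one_mul] at h
      have hlb : -B ≤ ∑' y, p (y - x) * u n y := by
        have h := Summable.tsum_le_tsum (f := fun y => -(p (y - x) * B))
          (g := fun y => p (y - x) * u n y)
          (fun y => by
            show -(p (y - x) * B) ≤ p (y - x) * u n y
            have hm := mul_nonneg (hp_nonneg (y - x))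
              (by linarith [(abs_le.mp (hB y)).1] : (0:ℝ) ≤ u n y + B)
            nlinarith)
          (((hpx x).mul_right B).neg) hsum
        rwa [tsum_neg, tsum_mul_right, hpx1 x, one_mul] at h
      have h1 : |transOp p (u n) x| ≤ B := by
        unfold transOp
        rw [abs_le]
        exact ⟨hlb, hub⟩
      have h2 : |σ (u n x) * ξ n x| ≤ Lipσ * B * Cξ := by
        rw [abs_mul]
        have ha : |σ (u n x)| ≤ Lipσ * B :=
          le_trans (hσabs _) (mul_le_mul_of_nonneg_left (hB x) hLσ)
        exact mul_le_mul ha (hCξ n x) (abs_nonneg _) (by positivity)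
      calc |transOp p (u n) x + σ (u n x) * ξ n x|
          ≤ |transOp p (u n) x| + |σ (u n x) * ξ n x| := abs_add_le _ _
        _ ≤ B + Lipσ * B * Cξ := add_le_add h1 h2
  intro n
  induction n with
  | zero => intro x; rw [hu_init]; exact h₀ x
  | succ n ih =>
    intro x
    rw [hu_rec]
    obtain ⟨B, hB0, hB⟩ := hbdd n
    have hsum : Summable (fun y => p (y - x) * u n y) := by
      apply Summable.of_norm_bounded ((hpx x).mul_right B)
      intro y
      rw [Real.norm_eq_abs, abs_mul, abs_of_nonneg (hp_nonneg _)]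
      exact mul_le_mul_of_nonneg_left (hB y) (hp_nonneg _)
    have h1 : p 0 * u n x ≤ transOp p (u n) x := by
      unfold transOp
      have := Summable.le_tsum hsum x (fun y _ => mul_nonneg (hp_nonneg _) (ih y))
      simpa using this
    have h2 : |σ (u n x) * ξ n x| ≤ p 0 * u n x := by
      rw [abs_mul]
      have ha : |σ (u n x)| ≤ Lipσ * u n x := by
        have := hσabs (u n x)
        rwa [abs_of_nonneg (ih x)] at this
      calc |σ (u n x)| * |ξ n x| ≤ (Lipσ * u n x) * Cξ :=
            mul_le_mul ha (hCξ n x) (abs_nonneg _)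
              (mul_nonneg hLσ (ih x))
        _ = Cξ * Lipσ * u n x := by ring
        _ ≤ p 0 * u n x := mul_le_mul_of_nonneg_right hcomp (ih x)
    have := neg_abs_le (σ (u n x) * ξ n x)
    linarith
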